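/- Let X be a fan with vertex v. If V is any open subset of X containing v, then X \ V is a fence; that is, X \ V is compact and each of its connected components is either an arc or a single point. -/

import Mathlib

open Set Filter Topology Metric

noncomputable section

/-- An arc in a topological space: a subset homeomorphic to the closed unit
interval `[0,1]`. -/
def IsArc {X : Type*} [TopologicalSpace X] (A : Set X) : Prop :=
  Nonempty (Set.Icc (0 : ℝ) 1 ≃ₜ A)

/-- `x` is an endpoint of the arc `A`: it is the image of `0` or `1` under some
homeomorphism from `[0,1]` onto `A`. -/
def IsArcEndpoint {X : Type*} [TopologicalSpace X] (A : Set X) (x : X) : Prop :=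
  ∃ e : Set.Icc (0 : ℝ) 1 ≃ₜ A,
    (e ⟨0, by norm_num⟩ : X) = x ∨ (e ⟨1, by norm_num⟩ : X) = x

/-- A point `x` on the frontier of an open set `U` is a piercing point of `U` if
for every open `V ∋ x` and every arc `α` in the space containing `x` with `x` not
an endpoint of `α`, the set `α ∩ V` meets both `U` and the complement of the
closure of `U`. -/
def IsPiercingPoint {X : Type*} [TopologicalSpace X] (U : Set X) (x : X) : Prop :=
  x ∈ frontier U ∧
    ∀ V : Set X, IsOpen V → x ∈ V →
      ∀ α : Set X, IsArc α → x ∈ α → ¬ IsArcEndpoint α x →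
        (α ∩ V ∩ U).Nonempty ∧ (α ∩ V ∩ (closure U)ᶜ).Nonempty

/-- An open set is pierced if every point of its frontier is a piercing point. -/
def IsPierced {X : Type*} [TopologicalSpace X] (U : Set X) : Prop :=
  IsOpen U ∧ ∀ x ∈ frontier U, IsPiercingPoint U x

/-- A space has the Jure property if its topology has a basis of pierced open sets. -/
def HasJureProperty (X : Type*) [TopologicalSpace X] : Prop :=
  ∃ B : Set (Set X), TopologicalSpace.IsTopologicalBasis B ∧ ∀ U ∈ B, IsPierced U

/-- A fence: a compact metric space each of whose connected components is an arc
or a single point. -/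
def IsFenceSpace (X : Type*) [MetricSpace X] : Prop :=
  CompactSpace X ∧
    ∀ x : X, IsArc (connectedComponent x) ∨ connectedComponent x = {x}

/-- `X` is a fan with vertex `v`: a continuum which is the union of a collection
of arcs any two of which meet exactly at `v`, and in which the intersection of
any two subcontinua is connected. -/
def IsFanWithVertex (X : Type*) [MetricSpace X] (v : X) : Prop :=
  Nonempty X ∧ CompactSpace X ∧ ConnectedSpace X ∧
    (∃ 𝓛 : Set (Set X), (∀ L ∈ 𝓛, IsArc L) ∧ ⋃₀ 𝓛 = Set.univ ∧
      ∀ L ∈ 𝓛, ∀ L' ∈ 𝓛, L ≠ L' → L ∩ L' = {v}) ∧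
    ∀ H K : Set X, H.Nonempty → IsCompact H → IsPreconnected H →
      K.Nonempty → IsCompact K → IsPreconnected K → IsPreconnected (H ∩ K)

/-- The Euclidean plane. -/
abbrev Plane : Type := EuclideanSpace ℝ (Fin 2)

/-- The closed annulus `A_{rq}(p)` between the circles of radii `r` and `q`
centered at `p`. -/
def closedAnnulus (p : Plane) (r q : ℝ) : Set Plane :=
  {x | min r q ≤ dist x p ∧ dist x p ≤ max r q}

/-- A fence inside the plane: a compact set each of whose connected components
is an arc or a single point. -/
def IsFenceSet (X : Set Plane) : Prop :=
  IsCompact X ∧ ∀ x ∈ X,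
    IsArc (connectedComponentIn X x) ∨ connectedComponentIn X x = {x}

/-- `β` is a bend at `S_r(p)` terminating at `S_q(p)`: an arc `β ⊆ X` contained
in the closed annulus `A_{rq}(p)`, meeting `S_r(p)`, and meeting `S_q(p)`
exactly in its two endpoints. -/
def IsBendTerminating (X : Set Plane) (p : Plane) (r q : ℝ) (β : Set Plane) : Prop :=
  IsArc β ∧ β ⊆ X ∧ β ⊆ closedAnnulus p r q ∧
    (β ∩ Metric.sphere p r).Nonempty ∧
    β ∩ Metric.sphere p q = {x | IsArcEndpoint β x}

/-- `β` is a bend at `S_r(p)`: a bend terminating at `S_q(p)` for some `q > 0`. -/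
def IsBendAt (X : Set Plane) (p : Plane) (r : ℝ) (β : Set Plane) : Prop :=
  ∃ q > 0, IsBendTerminating X p r q β

/-- The bend `β` (terminating at `S_q(p)`) separates `ϑ` from `∞`: there is an
arc `α ⊆ D_q(p)` meeting `S_q(p)` exactly at the endpoints of `β` such that `ϑ`
lies in a bounded connected component of the complement of `α ∪ β`. -/
def SeparatesFromInfinity (p : Plane) (q : ℝ) (β : Set Plane) (ϑ : Plane) : Prop :=
  ∃ α : Set Plane, IsArc α ∧ α ⊆ Metric.closedBall p q ∧
    α ∩ Metric.sphere p q = {x | IsArcEndpoint β x} ∧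
    ϑ ∉ α ∪ β ∧ Bornology.IsBounded (connectedComponentIn ((α ∪ β)ᶜ) ϑ)

/-- `𝔅_{qrϑ}`: the set of all bends at `S_r(p)` terminating at `S_q(p)` that
separate `ϑ` from `∞`. -/
def Bends (X : Set Plane) (p : Plane) (q r : ℝ) (ϑ : Plane) : Set (Set Plane) :=
  {β | IsBendTerminating X p r q β ∧ SeparatesFromInfinity p q β ϑ}

/-- Topological limit superior of a sequence of sets:
`⋂_N closure (⋃_{n ≥ N} A n)`. -/
def setLimsup {X : Type*} [TopologicalSpace X] (A : ℕ → Set X) : Set X :=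
  ⋂ N : ℕ, closure (⋃ n, ⋃ _ : N ≤ n, A n)

/-- The point `p + q • (cos θ, sin θ)` of the circle `S_q(p)`. -/
def circlePoint (p : Plane) (q θ : ℝ) : Plane :=
  p + (q * Real.cos θ) • EuclideanSpace.single (0 : Fin 2) (1 : ℝ)
    + (q * Real.sin θ) • EuclideanSpace.single (1 : Fin 2) (1 : ℝ)


section Aux

variable {X : Type*} [TopologicalSpace X]

lemma IsArc.exists_homeo {A : Set X} (h : IsArc A) :
    ∃ e : Set.Icc (0 : ℝ) 1 ≃ₜ A, True := ⟨h.some, trivial⟩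

lemma IsArc.isCompact {A : Set X} [T2Space X] (h : IsArc A) : IsCompact A := by
  obtain ⟨e⟩ := h
  have : A = Set.range (fun t : Set.Icc (0:ℝ) 1 => (e t : X)) := by
    ext y
    constructor
    · intro hy; exact ⟨e.symm ⟨y, hy⟩, by simp⟩
    · rintro ⟨t, rfl⟩; exact (e t).2
  rw [this, ← Set.image_univ]
  exact isCompact_univ.image (continuous_subtype_val.comp e.continuous)

lemma IsArc.isPreconnected {A : Set X} (h : IsArc A) : IsPreconnected A := by
  obtain ⟨e⟩ := h
  have : A = Set.range (fun t : Set.Icc (0:ℝ) 1 => (e t : X)) := by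
    ext y
    constructor
    · intro hy; exact ⟨e.symm ⟨y, hy⟩, by simp⟩
    · rintro ⟨t, rfl⟩; exact (e t).2
  rw [this, ← Set.image_univ]
  exact (PreconnectedSpace.isPreconnected_univ).image _
    (continuous_subtype_val.comp e.continuous).continuousOn

end Aux

/-- If `X` is a fan with vertex `v` and `V` is an open set
containing `v`, then `X \ V` is a fence: it is compact and each of its
connected components is an arc or a single point. -/
theorem fan_minus_nbhd_of_vertex_is_fence (X : Type*) [MetricSpace X]
    (v : X) (hX : IsFanWithVertex X v) (V : Set X) (hV : IsOpen V) (hvV : v ∈ V) :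
    IsCompact (Vᶜ : Set X) ∧ ∀ x ∈ (Vᶜ : Set X),
      IsArc (connectedComponentIn Vᶜ x) ∨ connectedComponentIn Vᶜ x = {x} := by
  obtain ⟨hne, hcomp, hconn, ⟨𝓛, h𝓛arc, h𝓛cover, h𝓛int⟩, hHK⟩ := hX
  have hVc : IsCompact (Vᶜ : Set X) := hV.isClosed_compl.isCompact
  refine ⟨hVc, fun x hx => ?_⟩
  set C := connectedComponentIn (Vᶜ : Set X) x with hCdef
  have hxC : x ∈ C := mem_connectedComponentIn hx
  have hCV : C ⊆ Vᶜ := connectedComponentIn_subset _ _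
  have hCpre : IsPreconnected C := isPreconnected_connectedComponentIn
  have hvC : v ∉ C := fun h => hCV h hvV
  -- C is compact
  have hCcomp : IsCompact C := by
    rw [hCdef, connectedComponentIn_eq_image hx]
    have : CompactSpace (Vᶜ : Set X) := isCompact_iff_compactSpace.mp hVc
    exact (isClosed_connectedComponent.isCompact).image continuous_subtype_val
  -- choose an arc L containing x
  have hxU : x ∈ ⋃₀ 𝓛 := by rw [h𝓛cover]; trivial
  obtain ⟨L, hL𝓛, hxL⟩ := hxU
  -- C ⊆ L
  have hCL : C ⊆ L := by
    by_contra hnot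
    obtain ⟨b, hbC, hbL⟩ := not_subset.mp hnot
    have hbU : b ∈ ⋃₀ 𝓛 := by rw [h𝓛cover]; trivial
    obtain ⟨L', hL'𝓛, hbL'⟩ := hbU
    have hLL' : L ≠ L' := fun h => hbL (h ▸ hbL')
    have hint : L ∩ L' = {v} := h𝓛int L hL𝓛 L' hL'𝓛 hLL'
    have hvmem : v ∈ L ∩ L' := by rw [hint]; exact rfl
    have hvL : v ∈ L := hvmem.1
    have hvL' : v ∈ L' := hvmem.2
    -- (L ∪ C) ∩ (L' ∪ C) = C ∪ {v}
    have hEq : (L ∪ C) ∩ (L' ∪ C) = C ∪ {v} := by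
      apply Set.Subset.antisymm
      · rintro y ⟨hy1 | hy1, hy2 | hy2⟩
        · right; exact hint ▸ ⟨hy1, hy2⟩
        · left; exact hy2
        · left; exact hy1
        · left; exact hy1
      · rintro y (hy | hy)
        · exact ⟨Or.inr hy, Or.inr hy⟩
        · rw [Set.mem_singleton_iff] at hy; subst hy
          exact ⟨Or.inl hvL, Or.inl hvL'⟩
    have hpre : IsPreconnected (C ∪ {v}) := by
      rw [← hEq]
      exact hHK (L ∪ C) (L' ∪ C) ⟨x, Or.inl hxL⟩
        ((h𝓛arc L hL𝓛).isCompact.union hCcomp)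
        ((h𝓛arc L hL𝓛).isPreconnected.union x hxL hxC hCpre)
        ⟨b, Or.inr hbC⟩
        ((h𝓛arc L' hL'𝓛).isCompact.union hCcomp)
        ((h𝓛arc L' hL'𝓛).isPreconnected.union b hbL' hbC hCpre)
    -- but C ∪ {v} is disconnected
    obtain ⟨U, W, hU, hW, hCU, hvW, hUW⟩ :=
      normal_separation hCcomp.isClosed isClosed_singleton
        (Set.disjoint_singleton_right.mpr hvC)
    obtain ⟨y, hy⟩ := hpre U W hU hW
      (Set.union_subset (hCU.trans Set.subset_union_left)
        (hvW.trans Set.subset_union_right))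
      ⟨x, Or.inl hxC, hCU hxC⟩
      ⟨v, Or.inr rfl, hvW rfl⟩
    exact hUW.le_bot ⟨hy.2.1, hy.2.2⟩
  -- now C is a compact connected subset of the arc L
  obtain ⟨e⟩ := h𝓛arc L hL𝓛
  set f : Set.Icc (0:ℝ) 1 → X := fun t => (e t : X) with hf
  have hfcont : Continuous f := continuous_subtype_val.comp e.continuous
  have hfemb : IsEmbedding f :=
    IsEmbedding.subtypeVal.comp e.isEmbedding
  have hrange : Set.range f = L := by
    ext y; constructor
    · rintro ⟨t, rfl⟩; exact (e t).2
    · intro hy; exact ⟨e.symm ⟨y, hy⟩, by simp [hf]⟩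
  set S : Set (Set.Icc (0:ℝ) 1) := f ⁻¹' C with hS
  have hfSC : f '' S = C := by
    rw [hS, Set.image_preimage_eq_inter_range, hrange,
      Set.inter_eq_left.mpr hCL]
  have hScomp : IsCompact S := by
    have : IsClosed S := hCcomp.isClosed.preimage hfcont
    exact this.isCompact
  have hSpre : IsPreconnected S := by
    rw [← hfemb.isInducing.isPreconnected_image, hfSC]
    exact hCpre
  have hSne : S.Nonempty := ⟨e.symm ⟨x, hCL hxC⟩, by simp [hS, hf, hxC]⟩
  -- push S to ℝ
  set S' : Set ℝ := Subtype.val '' S with hS'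
  have hS'comp : IsCompact S' := hScomp.image continuous_subtype_val
  have hS'pre : IsPreconnected S' :=
    hSpre.image _ continuous_subtype_val.continuousOn
  have hS'ne : S'.Nonempty := hSne.image _
  have hS'Icc : S' = Set.Icc (sInf S') (sSup S') :=
    eq_Icc_of_connected_compact ⟨hS'ne, hS'pre⟩ hS'comp
  have hmemS : ∀ t : Set.Icc (0:ℝ) 1, t ∈ S ↔ (t : ℝ) ∈ S' := by
    intro t
    constructor
    · intro ht; exact ⟨t, ht, rfl⟩
    · rintro ⟨u, hu, huv⟩; exact (Subtype.ext huv) ▸ hu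
  rcases lt_or_ge (sInf S') (sSup S') with hlt | hge
  · -- C is an arc
    left
    -- Icc 0 1 ≃ₜ Icc (sInf S') (sSup S') ≃ₜ S' ≃ₜ S ≃ₜ C
    have e1 : Set.Icc (0:ℝ) 1 ≃ₜ Set.Icc (sInf S') (sSup S') :=
      (iccHomeoI _ _ hlt).symm
    have e2 : Set.Icc (sInf S') (sSup S') ≃ₜ S' := Homeomorph.setCongr hS'Icc.symm
    have hvalemb : IsEmbedding (S.restrict (Subtype.val :
        Set.Icc (0:ℝ) 1 → ℝ)) :=
      IsEmbedding.subtypeVal.comp IsEmbedding.subtypeVal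
    have e3 : S ≃ₜ S' := by
      have := hvalemb.toHomeomorph
      rwa [show Set.range (S.restrict (Subtype.val : Set.Icc (0:ℝ) 1 → ℝ)) = _ from
        Set.range_domRestrict _ S] at this
    have hfSemb : IsEmbedding (S.restrict f) := hfemb.comp IsEmbedding.subtypeVal
    have e4 : S ≃ₜ C := by
      have := hfSemb.toHomeomorph
      rwa [show Set.range (S.restrict f) = _ from Set.range_domRestrict f S, hfSC] at this
    exact ⟨(e1.trans e2).trans (e3.symm.trans e4)⟩
  · -- C is a singleton
    right
    have hsub : ∀ y ∈ S', y = sInf S' := by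
      intro y hy
      rw [hS'Icc] at hy
      exact le_antisymm (hy.2.trans hge) hy.1
    have hSsing : ∀ t ∈ S, ∀ u ∈ S, t = u := by
      intro t ht u hu
      have h1 := hsub _ ((hmemS t).mp ht)
      have h2 := hsub _ ((hmemS u).mp hu)
      exact Subtype.ext (h1.trans h2.symm)
    apply Set.Subset.antisymm
    · intro y hy
      obtain ⟨ty, htyS, hty⟩ : ∃ t, t ∈ S ∧ f t = y := by
        have : y ∈ f '' S := hfSC ▸ hy
        obtain ⟨t, ht, htf⟩ := this; exact ⟨t, ht, htf⟩
      obtain ⟨tx, htxS, htx⟩ : ∃ t, t ∈ S ∧ f t = x := by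
        have : x ∈ f '' S := hfSC ▸ hxC
        obtain ⟨t, ht, htf⟩ := this; exact ⟨t, ht, htf⟩
      have := hSsing ty htyS tx htxS
      rw [Set.mem_singleton_iff, ← hty, ← htx, this]
    · intro y hy
      rw [Set.mem_singleton_iff] at hy; subst hy; exact hxC
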